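/- Let γ > 1, p = 3 if 1 < γ ≤ 5/3 and p = 2/(γ-1) if γ > 5/3. If A : ℝ → GL⁺(3,ℝ) is a C² solution of A''(t) = (det A(t))^{1-γ}(A(t)⁻¹)ᵀ, then there exist constants such that 1 + |t|^p ≲ det A(t) ≲ 1 + |t|³ for all t ∈ ℝ. -/

import Mathlib

set_option maxHeartbeats 1000000

open Matrix Filter Topology
noncomputable section
attribute [local instance] Matrix.normedAddCommGroup Matrix.normedSpace

abbrev M3 := Matrix (Fin 3) (Fin 3) ℝ

private def Sd (A : ℝ → M3) (t : ℝ) : ℝ :=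
  ∑ i, ∑ j, deriv A t i j * (A t).adjugate j i

private def TT (A : ℝ → M3) (t : ℝ) : ℝ :=
  ∑ i, ∑ j, deriv A t i j * (A t)⁻¹ j i

private def qq (A : ℝ → M3) (t : ℝ) : ℝ := ∑ i, ∑ j, (deriv A t i j)^2
private def gg (A : ℝ → M3) (t : ℝ) : ℝ := (∑ i, ∑ j, (A t i j)^2)/2
private def gd (A : ℝ → M3) (t : ℝ) : ℝ := ∑ i, ∑ j, A t i j * deriv A t i j
private def hh (γ : ℝ) (A : ℝ → M3) (t : ℝ) : ℝ := (A t).det ^ (1-γ)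
private def ee (γ : ℝ) (A : ℝ → M3) (t : ℝ) : ℝ := qq A t / 2 + hh γ A t / (γ-1)

private lemma hasDerivAt_entry {A : ℝ → M3} (hA : Differentiable ℝ A) (t : ℝ) (i j : Fin 3) :
    HasDerivAt (fun s => A s i j) (deriv A t i j) t :=
  hasDerivAt_pi.mp (hasDerivAt_pi.mp (hA t).hasDerivAt i) j

private lemma jacobi {A : ℝ → M3} (hA : Differentiable ℝ A) (t : ℝ) :
    HasDerivAt (fun s => (A s).det) (Sd A t) t := by
  have hd : ∀ i j, HasDerivAt (fun s => A s i j) (deriv A t i j) t := hasDerivAt_entry hA t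
  have hfun : (fun s => (A s).det) = fun s =>
      A s 0 0 * A s 1 1 * A s 2 2 - A s 0 0 * A s 1 2 * A s 2 1 - A s 0 1 * A s 1 0 * A s 2 2 +
        A s 0 1 * A s 1 2 * A s 2 0 + A s 0 2 * A s 1 0 * A s 2 1 - A s 0 2 * A s 1 1 * A s 2 0 :=
    funext fun s => Matrix.det_fin_three _
  rw [hfun]
  have H := (((((((hd 0 0).mul (hd 1 1)).mul (hd 2 2)).sub
      (((hd 0 0).mul (hd 1 2)).mul (hd 2 1))).sub
      (((hd 0 1).mul (hd 1 0)).mul (hd 2 2))).add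
      (((hd 0 1).mul (hd 1 2)).mul (hd 2 0))).add
      (((hd 0 2).mul (hd 1 0)).mul (hd 2 1))).sub
      (((hd 0 2).mul (hd 1 1)).mul (hd 2 0))
  refine H.congr_deriv (Eq.symm ?_)
  rw [Sd, Matrix.adjugate_fin_three]
  simp [Fin.sum_univ_three]
  ring

private lemma monoOn_of_hasDerivAt {f f' : ℝ → ℝ} (hf : ∀ s, HasDerivAt f (f' s) s) {a : ℝ}
    (h0 : ∀ s, a ≤ s → 0 ≤ f' s) : MonotoneOn f (Set.Ici a) := by
  apply monotoneOn_of_deriv_nonneg (convex_Ici a)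
  · exact fun x _ => ((hf x).differentiableAt).continuousAt.continuousWithinAt
  · exact fun x _ => (hf x).differentiableAt.differentiableWithinAt
  · intro x hx
    rw [interior_Ici] at hx
    rw [(hf x).deriv]
    exact h0 x (le_of_lt hx)

private lemma antiOn_of_hasDerivAt {f f' : ℝ → ℝ} (hf : ∀ s, HasDerivAt f (f' s) s) {a : ℝ}
    (h0 : ∀ s, a ≤ s → f' s ≤ 0) : AntitoneOn f (Set.Ici a) := by
  apply antitoneOn_of_deriv_nonpos (convex_Ici a)
  · exact fun x _ => ((hf x).differentiableAt).continuousAt.continuousWithinAt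
  · exact fun x _ => (hf x).differentiableAt.differentiableWithinAt
  · intro x hx
    rw [interior_Ici] at hx
    rw [(hf x).deriv]
    exact h0 x (le_of_lt hx)

private theorem key (γ p : ℝ) (hγ : 1 < γ)
    (hp : p = if γ ≤ 5/3 then 3 else 2 / (γ - 1))
    (A : ℝ → M3)
    (hA : ContDiff ℝ 2 A)
    (hdet : ∀ t : ℝ, 0 < (A t).det)
    (hODE : ∀ t : ℝ, deriv (deriv A) t = ((A t).det ^ (1 - γ)) • ((A t)⁻¹)ᵀ) :
    ∃ c C : ℝ, 0 < c ∧ 0 < C ∧ ∀ t : ℝ, 0 ≤ t →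
      c * (1 + t ^ p) ≤ (A t).det ∧ (A t).det ≤ C * (1 + t ^ 3) := by
  have hγ0 : (0:ℝ) < γ - 1 := by linarith
  have hγ1 : γ - 1 ≠ 0 := ne_of_gt hγ0
  have hdA : Differentiable ℝ A := hA.differentiable (by norm_num)
  have hdA1 : Differentiable ℝ (deriv A) := by
    have hA' : ContDiff ℝ ((1:WithTop ℕ∞)+1) A := by
      rw [show ((1:WithTop ℕ∞)+1) = 2 from by norm_num]; exact hA
    exact (contDiff_succ_iff_deriv.mp hA').2.2.differentiable (by norm_num)
  have hent := hasDerivAt_entry hdA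
  have hent1 : ∀ (t : ℝ) (i j : Fin 3),
      HasDerivAt (fun s => deriv A s i j) (hh γ A t * (A t)⁻¹ j i) t := by
    intro t i j
    have h0 := hasDerivAt_entry hdA1 t i j
    rwa [hODE, Matrix.smul_apply, Matrix.transpose_apply] at h0
  have hunit : ∀ t, IsUnit (A t).det := fun t => (isUnit_iff_ne_zero).mpr (ne_of_gt (hdet t))
  have htr : ∀ t, ∑ i, ∑ j, A t i j * (A t)⁻¹ j i = 3 := by
    intro t
    have h1 : A t * (A t)⁻¹ = 1 := Matrix.mul_nonsing_inv _ (hunit t)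
    have h2 : ∑ i, (A t * (A t)⁻¹) i i = (3:ℝ) := by
      rw [h1]; simp [Matrix.one_apply, Fin.sum_univ_three]
    rw [← h2]; simp [Matrix.mul_apply]
  have hadj : ∀ (t:ℝ) (j i : Fin 3), (A t)⁻¹ j i = ((A t).det)⁻¹ * (A t).adjugate j i := by
    intro t j i
    rw [Matrix.inv_def]
    simp [Ring.inverse_eq_inv']
  have hST : ∀ t, Sd A t = (A t).det * TT A t := by
    intro t
    have hne : (A t).det ≠ 0 := ne_of_gt (hdet t)
    simp only [Sd, TT, Fin.sum_univ_three, hadj]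
    field_simp
  -- derivative facts
  have hhd : ∀ t, HasDerivAt (hh γ A) ((1-γ) * hh γ A t * TT A t) t := by
    intro t
    have h0 := (jacobi hdA t).rpow_const (p := 1-γ) (Or.inl (ne_of_gt (hdet t)))
    show HasDerivAt (fun s => (A s).det ^ (1-γ)) ((1-γ) * hh γ A t * TT A t) t
    convert h0 using 1
    rw [hST, hh]
    have hδ := hdet t
    have hne : (A t).det ≠ 0 := ne_of_gt hδ
    rw [show (1 - γ - 1) = (1-γ) + (-1) by ring, Real.rpow_add hδ, Real.rpow_neg_one]
    field_simp
  have hqd : ∀ t, HasDerivAt (qq A) (2 * hh γ A t * TT A t) t := by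
    intro t
    have H : HasDerivAt (fun s => ∑ i, ∑ j, (deriv A s i j)^2)
        (∑ i, ∑ j, (2 * deriv A t i j * (hh γ A t * (A t)⁻¹ j i))) t := by
      apply HasDerivAt.fun_sum; intro i _
      apply HasDerivAt.fun_sum; intro j _
      convert ((hent1 t i j).mul (hent1 t i j)) using 1
      · rfl
      · funext s; simp [pow_two]
      · ring
    have heq : (∑ i, ∑ j, (2 * deriv A t i j * (hh γ A t * (A t)⁻¹ j i)))
        = 2 * hh γ A t * TT A t := by
      simp only [TT, Fin.sum_univ_three]; ring
    rw [← heq]; exact H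
  have hgd : ∀ t, HasDerivAt (gg A) (gd A t) t := by
    intro t
    have H : HasDerivAt (fun s => (∑ i, ∑ j, (A s i j)^2)/2)
        ((∑ i, ∑ j, 2 * A t i j * deriv A t i j)/2) t := by
      apply HasDerivAt.div_const
      apply HasDerivAt.fun_sum; intro i _
      apply HasDerivAt.fun_sum; intro j _
      convert ((hent t i j).mul (hent t i j)) using 1
      · rfl
      · funext s; simp [pow_two]
      · ring
    have heq : (∑ i, ∑ j, 2 * A t i j * deriv A t i j)/2 = gd A t := by
      simp only [gd, Fin.sum_univ_three]; ring
    rw [← heq]; exact H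
  have hgdd : ∀ t, HasDerivAt (gd A) (qq A t + 3 * hh γ A t) t := by
    intro t
    have H : HasDerivAt (fun s => ∑ i, ∑ j, A s i j * deriv A s i j)
        (∑ i, ∑ j, (deriv A t i j * deriv A t i j + A t i j * (hh γ A t * (A t)⁻¹ j i))) t := by
      apply HasDerivAt.fun_sum; intro i _
      apply HasDerivAt.fun_sum; intro j _
      exact (hent t i j).mul (hent1 t i j)
    have heq : (∑ i, ∑ j, (deriv A t i j * deriv A t i j + A t i j * (hh γ A t * (A t)⁻¹ j i)))
        = qq A t + 3 * hh γ A t := by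
      have h3 := htr t
      simp only [qq, Fin.sum_univ_three] at *
      linear_combination (hh γ A t) * h3
    rw [← heq]; exact H
  have heed : ∀ t, HasDerivAt (ee γ A) 0 t := by
    intro t
    have H := ((hqd t).div_const 2).add ((hhd t).div_const (γ-1))
    have heq : 2 * hh γ A t * TT A t / 2 + (1 - γ) * hh γ A t * TT A t / (γ - 1) = 0 := by
      field_simp
      ring
    rwa [heq] at H
  have hEconst : ∀ t, ee γ A t = ee γ A 0 := by
    intro t
    exact is_const_of_deriv_eq_zero (fun s => (heed s).differentiableAt)
      (fun s => (heed s).deriv) t 0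
  set E := ee γ A 0 with hEdef
  have hq0 : ∀ t, 0 ≤ qq A t :=
    fun t => Finset.sum_nonneg fun i _ => Finset.sum_nonneg fun j _ => sq_nonneg _
  have hhpos : ∀ t, 0 < hh γ A t := fun t => Real.rpow_pos_of_pos (hdet t) _
  have hEpos : 0 < E := by
    have h1 := hq0 0; have h2 := hhpos 0
    have : 0 < qq A 0 / 2 + hh γ A 0 / (γ-1) :=
      add_pos_of_nonneg_of_pos (div_nonneg h1 (by norm_num)) (div_pos h2 hγ0)
    exact this
  have hqval : ∀ t, qq A t = 2*E - 2*(hh γ A t)/(γ-1) := by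
    intro t
    have h := hEconst t
    simp only [ee] at h
    field_simp at h ⊢
    linarith
  have hhleE : ∀ t, hh γ A t ≤ (γ-1)*E := by
    intro t
    have h1 := hq0 t
    rw [hqval t] at h1
    have h2 : 0 ≤ (2*E - 2*hh γ A t/(γ-1)) * (γ-1) := mul_nonneg h1 hγ0.le
    have h3 : (2*E - 2*hh γ A t/(γ-1)) * (γ-1) = 2*E*(γ-1) - 2*hh γ A t := by
      field_simp
    rw [h3] at h2
    nlinarith
  have hδeq : ∀ t, (A t).det = (hh γ A t) ^ (-(1/(γ-1))) := by
    intro t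
    rw [hh, ← Real.rpow_mul (le_of_lt (hdet t)),
      show (1-γ)*(-(1/(γ-1))) = 1 by field_simp; ring, Real.rpow_one]
  set δ₀ := ((γ-1)*E) ^ (-(1/(γ-1))) with hδ₀def
  have hδ₀pos : 0 < δ₀ := Real.rpow_pos_of_pos (by positivity) _
  have hδlow : ∀ t, δ₀ ≤ (A t).det := by
    intro t
    rw [hδeq t]
    exact Real.rpow_le_rpow_of_nonpos (hhpos t) (hhleE t)
      (by rw [neg_nonpos]; positivity)
  have hCS : ∀ t, (gd A t)^2 ≤ 2 * gg A t * qq A t := by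
    intro t
    have h := Finset.sum_mul_sq_le_sq_mul_sq (Finset.univ : Finset (Fin 3 × Fin 3))
      (fun pr => A t pr.1 pr.2) (fun pr => deriv A t pr.1 pr.2)
    rw [Fintype.sum_prod_type, Fintype.sum_prod_type, Fintype.sum_prod_type] at h
    simp only [gg, gd, qq]
    ring_nf at h ⊢
    linarith
  have hggpos : ∀ t, 0 < gg A t := by
    intro t
    have hAne : A t ≠ 0 := by
      intro h0
      have := hdet t
      rw [h0] at this
      simp at this
    have hsne : ∑ i, ∑ j, (A t i j)^2 ≠ 0 := by
      intro hz
      apply hAne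
      ext i j
      have h1 := (Finset.sum_eq_zero_iff_of_nonneg
        (fun i _ => Finset.sum_nonneg fun j _ => sq_nonneg (A t i j))).mp hz i (Finset.mem_univ i)
      have h2 := (Finset.sum_eq_zero_iff_of_nonneg
        (fun j _ => sq_nonneg (A t i j))).mp h1 j (Finset.mem_univ j)
      have := sq_eq_zero_iff.mp h2
      simpa using this
    have hsnn : 0 ≤ ∑ i, ∑ j, (A t i j)^2 :=
      Finset.sum_nonneg fun i _ => Finset.sum_nonneg fun j _ => sq_nonneg _
    exact div_pos (lt_of_le_of_ne hsnn (Ne.symm hsne)) (by norm_num)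
  set β := 3 - 2/(γ-1) with hβdef
  have hβval : ∀ t, qq A t + 3*hh γ A t = 2*E + β*hh γ A t := by
    intro t
    rw [hqval t, hβdef]
    ring
  set m := E * min 2 (3*(γ-1)) with hmdef
  have hmpos : 0 < m := mul_pos hEpos (lt_min (by norm_num) (by linarith))
  have hqm : ∀ t, m ≤ qq A t + 3*hh γ A t := by
    intro t
    rw [hβval t]
    rcases le_or_gt 0 β with hb | hb
    · have h1 : min 2 (3*(γ-1)) ≤ 2 := min_le_left _ _
      have h2 : m ≤ 2*E := by rw [hmdef]; nlinarith
      have h3 : 0 ≤ β * hh γ A t := mul_nonneg hb (hhpos t).le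
      linarith
    · have h1 : β*((γ-1)*E) ≤ β*hh γ A t :=
        mul_le_mul_of_nonpos_left (hhleE t) hb.le
      have h2 : 2*E + β*((γ-1)*E) = 3*(γ-1)*E := by
        rw [hβdef]; field_simp; ring
      have h3 : min 2 (3*(γ-1)) ≤ 3*(γ-1) := min_le_right _ _
      have h4 : m ≤ 3*(γ-1)*E := by rw [hmdef]; nlinarith
      linarith
  -- linear and quadratic growth of gd, gg for t ≥ 0
  have hgdlin : ∀ t, 0 ≤ t → gd A 0 + m*t ≤ gd A t := by
    intro t ht
    have hder : ∀ s : ℝ, HasDerivAt (fun u => gd A u - m*u) (qq A s + 3*hh γ A s - m) s := by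
      intro s
      have := (hgdd s).sub ((hasDerivAt_id s).const_mul m); rw [mul_one] at this; exact this
    have hmono := monoOn_of_hasDerivAt hder (a := 0) (fun s _ => by have := hqm s; linarith)
    have := hmono (Set.mem_Ici.mpr le_rfl) (Set.mem_Ici.mpr ht) ht
    simp only [mul_zero, sub_zero] at this
    linarith
  have hgquad : ∀ t, 0 ≤ t → gg A 0 + gd A 0 * t + m*t^2/2 ≤ gg A t := by
    intro t ht
    have hder : ∀ s : ℝ, HasDerivAt (fun u => gg A u - gd A 0 * u - m*u^2/2)
        (gd A s - gd A 0 - m*s) s := by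
      intro s
      have h1 := ((hgd s).sub ((hasDerivAt_id s).const_mul (gd A 0))).sub
        (((hasDerivAt_pow 2 s).const_mul m).div_const 2)
      refine h1.congr_deriv ?_
      push_cast
      ring
    have hmono := monoOn_of_hasDerivAt hder (a := 0)
      (fun s hs => by have := hgdlin s hs; linarith)
    have := hmono (Set.mem_Ici.mpr le_rfl) (Set.mem_Ici.mpr ht) ht
    simp only [mul_zero, sub_zero, ne_eq, OfNat.ofNat_ne_zero, not_false_eq_true, zero_pow,
      zero_div] at this
    linarith
  set t₁ := 1 + 8*(|gg A 0| + |gd A 0| + 1)/m with ht₁def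
  have ht₁one : 1 ≤ t₁ := by
    rw [ht₁def]
    have : 0 ≤ 8*(|gg A 0| + |gd A 0| + 1)/m := by positivity
    linarith
  have hmt₁ : m + 8*(|gg A 0| + |gd A 0| + 1) = m * t₁ := by
    rw [ht₁def]; field_simp
  have hgdpos : ∀ t, t₁ ≤ t → 0 < gd A t := by
    intro t ht
    have h0 := hgdlin t (by linarith)
    have h1 : m*t₁ ≤ m*t := mul_le_mul_of_nonneg_left ht hmpos.le
    have h2 := neg_abs_le (gd A 0)
    have h3 := abs_nonneg (gg A 0)
    nlinarith
  have hglow : ∀ t, t₁ ≤ t → m/4*t^2 ≤ gg A t := by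
    intro t ht
    have ht0 : (1:ℝ) ≤ t := le_trans ht₁one ht
    have h0 := hgquad t (by linarith)
    have h1 : m*t₁ ≤ m*t := mul_le_mul_of_nonneg_left ht hmpos.le
    have h2 : m*t₁*t ≤ m*t*t := mul_le_mul_of_nonneg_right h1 (by linarith)
    have h3 := neg_abs_le (gd A 0)
    have h4 := neg_abs_le (gg A 0)
    have h5 := abs_nonneg (gd A 0)
    have h6 := abs_nonneg (gg A 0)
    nlinarith
  -- the function D
  set DD := fun t => 4*E*gg A t - (gd A t)^2 with hDDdef
  have hDd : ∀ t, HasDerivAt DD (2*gd A t*(2*E - (qq A t + 3*hh γ A t))) t := by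
    intro t
    have h1 := ((hgd t).const_mul (4*E)).sub ((hgdd t).pow 2)
    refine h1.congr_deriv ?_
    ring
  have hDlow : ∀ t, 4*gg A t*hh γ A t/(γ-1) ≤ DD t := by
    intro t
    have h1 := hCS t
    have h4 : 2*E - qq A t = 2*hh γ A t/(γ-1) := by rw [hqval t]; ring
    have h5 : 2*gg A t*(2*E - qq A t) = 4*gg A t*hh γ A t/(γ-1) := by rw [h4]; ring
    show 4*gg A t*hh γ A t/(γ-1) ≤ 4*E*gg A t - (gd A t)^2
    nlinarith [hggpos t]
  have hDpos : ∀ t, 0 < DD t := fun t =>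
    lt_of_lt_of_le (by have := hggpos t; have := hhpos t; positivity) (hDlow t)
  have hppos : 0 < p := by
    rw [hp]; split_ifs
    · norm_num
    · positivity
  set qex := p*(γ-1) with hqexdef
  -- main claim: decay of hh
  have hclaim : ∃ C₅ : ℝ, 0 < C₅ ∧ ∀ t, t₁ ≤ t → hh γ A t ≤ C₅ * t ^ (-qex) := by
    rcases le_or_gt β 0 with hb | hb
    · -- γ ≤ 5/3, p = 3, Gronwall via Ψ = DD/gg^κ
      have hγ53 : γ ≤ 5/3 := by
        have h1 : (3:ℝ) ≤ 2/(γ-1) := by rw [hβdef] at hb; linarith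
        have h2 : 3*(γ-1) ≤ 2 := (le_div_iff₀ hγ0).mp h1
        linarith
      have hpval : p = 3 := by rw [hp, if_pos hγ53]
      have hqexval : qex = 3*(γ-1) := by rw [hqexdef, hpval]
      set κ := -β*(γ-1)/2 with hκdef
      have hκ0 : 0 ≤ κ := by
        rw [hκdef]
        have : 0 ≤ -β := by linarith
        positivity
      have hκ1 : κ - 1 ≤ 0 := by
        have : β = 3 - 2/(γ-1) := hβdef
        rw [hκdef, this]
        have h2 : (2/(γ-1))*(γ-1) = 2 := by field_simp
        nlinarith
      set Ψ := fun t => DD t / (gg A t) ^ κ with hΨdef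
      have hgκpos : ∀ t, 0 < (gg A t) ^ κ := fun t => Real.rpow_pos_of_pos (hggpos t) _
      have hΨd : ∀ t, HasDerivAt Ψ
          ((2*gd A t*(2*E - (qq A t + 3*hh γ A t)) * (gg A t)^κ -
            DD t * (gd A t * (κ * (gg A t)^(κ-1)))) / ((gg A t)^κ)^2) t := by
        intro t
        have hrp := (hgd t).rpow_const (p := κ) (Or.inl (ne_of_gt (hggpos t)))
        have := (hDd t).div hrp (ne_of_gt (hgκpos t))
        refine this.congr_deriv ?_
        ring
      have hΨanti : AntitoneOn Ψ (Set.Ici t₁) := by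
        apply antiOn_of_hasDerivAt hΨd
        intro s hs
        apply div_nonpos_of_nonpos_of_nonneg _ (sq_nonneg _)
        have hgdp := hgdpos s hs
        have hX : 0 < (gg A s)^(κ-1) := Real.rpow_pos_of_pos (hggpos s) _
        have hsplit : (gg A s)^κ = (gg A s)^(κ-1) * gg A s := by
          have h9 : (gg A s)^(κ-1) * (gg A s)^(1:ℝ) = (gg A s)^κ := by
            rw [← Real.rpow_add (hggpos s)]; norm_num
          rw [Real.rpow_one] at h9
          exact h9.symm
        have hb2 : 2*E - (qq A s + 3*hh γ A s) = -(β*hh γ A s) := by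
          rw [hβval s]; ring
        have h5 : -2*β*(hh γ A s)*(gg A s) ≤ κ * DD s := by
          have he : -2*β*(hh γ A s)*(gg A s) = κ*(4*gg A s*hh γ A s/(γ-1)) := by
            rw [hκdef]; field_simp; ring
          rw [he]
          exact mul_le_mul_of_nonneg_left (hDlow s) hκ0
        have h6 : (gg A s)^(κ-1) * gd A s * (-2*β*(hh γ A s)*(gg A s))
            ≤ (gg A s)^(κ-1) * gd A s * (κ * DD s) :=
          mul_le_mul_of_nonneg_left h5 (by positivity)
        rw [hb2, hsplit]
        nlinarith [h6]
      have hΨb : ∀ t, t₁ ≤ t → DD t ≤ Ψ t₁ * (gg A t)^κ := by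
        intro t ht
        have := hΨanti (Set.mem_Ici.mpr le_rfl) (Set.mem_Ici.mpr ht) ht
        rw [hΨdef] at this
        calc DD t = (DD t / (gg A t)^κ) * (gg A t)^κ :=
              (div_mul_cancel₀ (DD t) (ne_of_gt (hgκpos t))).symm
        _ ≤ Ψ t₁ * (gg A t)^κ := mul_le_mul_of_nonneg_right this (hgκpos t).le
      refine ⟨(γ-1) * (Ψ t₁ * (m/4)^(κ-1))/4, ?_, ?_⟩
      · have hΨpos : 0 < Ψ t₁ := div_pos (hDpos t₁) (hgκpos t₁)
        have : (0:ℝ) < (m/4)^(κ-1) := Real.rpow_pos_of_pos (by positivity) _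
        positivity
      · intro t ht
        have htpos : 0 < t := lt_of_lt_of_le (by linarith [ht₁one]) ht
        have hgl := hglow t ht
        have h1 : hh γ A t ≤ (γ-1) * DD t/(4*gg A t) := by
          have h0 := hDlow t
          rw [le_div_iff₀ (show (0:ℝ) < 4*gg A t by have := hggpos t; positivity)]
          have h2 := mul_le_mul_of_nonneg_right h0 hγ0.le
          have h3 : 4*gg A t*hh γ A t/(γ-1)*(γ-1) = 4*gg A t*hh γ A t := by field_simp
          rw [h3] at h2
          nlinarith
        have h2 : DD t ≤ Ψ t₁ * (gg A t)^κ := hΨb t ht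
        have h3 : (gg A t)^(κ-1) ≤ (m/4*t^2)^(κ-1) :=
          Real.rpow_le_rpow_of_nonpos (by positivity) hgl hκ1
        have h4 : (m/4*t^2)^(κ-1) = (m/4)^(κ-1) * t^(-qex) := by
          rw [Real.mul_rpow (by positivity) (by positivity)]
          congr 1
          rw [← Real.rpow_natCast t 2, ← Real.rpow_mul htpos.le]
          congr 1
          rw [hqexval, hκdef, hβdef]
          push_cast
          field_simp
          ring
        have hΨpos : 0 < Ψ t₁ := div_pos (hDpos t₁) (hgκpos t₁)
        have hgκκ : (gg A t)^κ = gg A t * (gg A t)^(κ-1) := by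
          have h9 : (gg A t)^(1:ℝ) * (gg A t)^(κ-1) = (gg A t)^κ := by
            rw [← Real.rpow_add (hggpos t)]; norm_num
          rw [Real.rpow_one] at h9
          exact h9.symm
        calc hh γ A t ≤ (γ-1) * DD t/(4*gg A t) := h1
        _ ≤ (γ-1) * (Ψ t₁ * (gg A t)^κ)/(4*gg A t) := by
            have h9 : (0:ℝ) < 4 * gg A t := by have := hggpos t; linarith
            apply div_le_div₀ (mul_nonneg hγ0.le (mul_nonneg hΨpos.le (hgκpos t).le))
              (mul_le_mul_of_nonneg_left h2 hγ0.le) h9 le_rfl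
        _ = (γ-1) * Ψ t₁ * (gg A t)^(κ-1)/4 := by
            rw [hgκκ]
            field_simp [ne_of_gt (hggpos t)]
        _ ≤ (γ-1) * Ψ t₁ * ((m/4*t^2)^(κ-1))/4 := by
            have h9 : 0 ≤ (γ-1) * Ψ t₁ := by positivity
            apply div_le_div₀ (by positivity) (mul_le_mul_of_nonneg_left h3 h9) (by norm_num) le_rfl
        _ = (γ-1) * (Ψ t₁ * (m/4)^(κ-1))/4 * t^(-qex) := by
            rw [h4]; ring
    · -- γ > 5/3, p = 2/(γ-1), qex = 2, DD antitone
      have hγ53 : ¬ (γ ≤ 5/3) := by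
        intro hcon
        have h1 : 3*(γ-1) ≤ 2 := by nlinarith
        have h2 : 2/(γ-1) ≥ 3 := by
          rw [ge_iff_le, le_div_iff₀ hγ0]
          linarith
        rw [hβdef] at hb
        linarith
      have hpval : p = 2/(γ-1) := by rw [hp, if_neg hγ53]
      have hqexval : qex = 2 := by rw [hqexdef, hpval]; field_simp
      have hDanti : AntitoneOn DD (Set.Ici t₁) := by
        apply antiOn_of_hasDerivAt hDd
        intro s hs
        have hb2 : 2*E - (qq A s + 3*hh γ A s) = -(β*hh γ A s) := by
          rw [hβval s]; ring
        rw [hb2]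
        nlinarith [mul_pos (hgdpos s hs) (mul_pos hb (hhpos s))]
      refine ⟨(γ-1) * DD t₁ / m, div_pos (mul_pos hγ0 (hDpos t₁)) hmpos, ?_⟩
      intro t ht
      have htpos : 0 < t := lt_of_lt_of_le (by linarith [ht₁one]) ht
      have hgl := hglow t ht
      have h2 : DD t ≤ DD t₁ := hDanti (Set.mem_Ici.mpr le_rfl) (Set.mem_Ici.mpr ht) ht
      have h1 : hh γ A t ≤ (γ-1) * DD t/(4*gg A t) := by
        have h0 := hDlow t
        rw [le_div_iff₀ (show (0:ℝ) < 4*gg A t by have := hggpos t; positivity)]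
        have h2 := mul_le_mul_of_nonneg_right h0 hγ0.le
        have h3 : 4*gg A t*hh γ A t/(γ-1)*(γ-1) = 4*gg A t*hh γ A t := by field_simp
        rw [h3] at h2
        nlinarith
      have htq : t ^ (-qex) = (t^2)⁻¹ := by
        rw [hqexval, show ((t:ℝ)^2 : ℝ) = t ^ ((2:ℕ):ℝ) from (Real.rpow_natCast t 2).symm,
          ← Real.rpow_neg htpos.le]
        norm_num
      rw [htq]
      have hg4 : 0 < gg A t := hggpos t
      have ht2 : (0:ℝ) < t^2 := by positivity
      calc hh γ A t ≤ (γ-1) * DD t/(4*gg A t) := h1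
      _ ≤ (γ-1) * DD t₁/(4*(m/4*t^2)) := by
          apply div_le_div₀ (mul_nonneg hγ0.le (hDpos t₁).le)
            (mul_le_mul_of_nonneg_left h2 hγ0.le) (by positivity) (by linarith [hgl])
      _ = (γ-1) * DD t₁ / m * (t^2)⁻¹ := by
          field_simp
  obtain ⟨C₅, hC₅pos, hC₅⟩ := hclaim
  have hr0 : (0:ℝ) < 1/(γ-1) := by positivity
  have hrneg : -(1/(γ-1)) ≤ 0 := by linarith
  set c₆ := C₅ ^ (-(1/(γ-1))) with hc₆def
  have hc₆pos : 0 < c₆ := Real.rpow_pos_of_pos hC₅pos _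
  have hlow1 : ∀ t, t₁ ≤ t → c₆ * t ^ p ≤ (A t).det := by
    intro t ht
    have htpos : 0 < t := lt_of_lt_of_le (by linarith [ht₁one]) ht
    have h1 := hC₅ t ht
    have h2 : (C₅ * t ^ (-qex)) ^ (-(1/(γ-1))) ≤ (hh γ A t) ^ (-(1/(γ-1))) :=
      Real.rpow_le_rpow_of_nonpos (hhpos t) h1 hrneg
    rw [← hδeq t] at h2
    have h3 : (C₅ * t ^ (-qex)) ^ (-(1/(γ-1))) = c₆ * t ^ p := by
      rw [Real.mul_rpow hC₅pos.le (Real.rpow_nonneg htpos.le _), ← Real.rpow_mul htpos.le]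
      rw [hc₆def]
      congr 1
      rw [hqexdef]
      field_simp
    rw [h3] at h2
    exact h2
  have honele : ∀ t, t₁ ≤ t → (1:ℝ) ≤ t ^ p :=
    fun t ht => Real.one_le_rpow (le_trans ht₁one ht) hppos.le
  have ht₁p : (0:ℝ) < 1 + t₁ ^ p := by
    have : (0:ℝ) < t₁ ^ p := Real.rpow_pos_of_pos (by linarith [ht₁one]) _
    linarith
  set c := min (c₆/2) (δ₀/(1+t₁^p)) with hcdef
  have hcpos : 0 < c := lt_min (by positivity) (div_pos hδ₀pos ht₁p)
  have hlower : ∀ t, 0 ≤ t → c * (1 + t ^ p) ≤ (A t).det := by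
    intro t ht
    rcases le_or_gt t₁ t with hcase | hcase
    · have h1 := hlow1 t hcase
      have h2 := honele t hcase
      have h3 : c * (1 + t ^ p) ≤ (c₆/2) * (2 * t^p) := by
        apply mul_le_mul (min_le_left _ _) (by linarith) (by positivity) (by positivity)
      calc c * (1 + t ^ p) ≤ (c₆/2) * (2 * t^p) := h3
      _ = c₆ * t ^ p := by ring
      _ ≤ (A t).det := h1
    · have h1 : t ^ p ≤ t₁ ^ p := Real.rpow_le_rpow ht hcase.le hppos.le
      have h3 : c * (1 + t ^ p) ≤ (δ₀/(1+t₁^p)) * (1 + t₁^p) := by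
        apply mul_le_mul (min_le_right _ _) (by linarith) ?_ (div_pos hδ₀pos ht₁p).le
        have : (0:ℝ) ≤ t ^ p := Real.rpow_nonneg ht _
        linarith
      rw [div_mul_cancel₀ _ (ne_of_gt ht₁p)] at h3
      exact le_trans h3 (hδlow t)
  -- upper bound
  set V := Real.sqrt (2*E) with hVdef
  have hV0 : 0 ≤ V := Real.sqrt_nonneg _
  have hA1bd : ∀ (t : ℝ) (i j : Fin 3), |deriv A t i j| ≤ V := by
    intro t i j
    have h2 : (deriv A t i j)^2 ≤ ∑ j', (deriv A t i j')^2 :=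
      Finset.single_le_sum (fun j' _ => sq_nonneg (deriv A t i j')) (Finset.mem_univ j)
    have h3 : ∑ j', (deriv A t i j')^2 ≤ ∑ i', ∑ j', (deriv A t i' j')^2 :=
      Finset.single_le_sum (f := fun i' => ∑ j', (deriv A t i' j')^2)
        (fun i' _ => Finset.sum_nonneg fun j' _ => sq_nonneg _) (Finset.mem_univ i)
    have h4 : qq A t ≤ 2*E := by
      rw [hqval t]
      have h5 : 0 < 2*hh γ A t/(γ-1) := by have := hhpos t; positivity
      linarith
    have h1 : (deriv A t i j)^2 ≤ 2*E := le_trans (le_trans h2 h3) h4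
    calc |deriv A t i j| = Real.sqrt ((deriv A t i j)^2) := (Real.sqrt_sq_eq_abs _).symm
    _ ≤ V := Real.sqrt_le_sqrt h1
  have hAent : ∀ (t : ℝ) (i j : Fin 3), |A t i j| ≤ |A 0 i j| + V * |t| := by
    intro t i j
    have h1 : ‖A t i j - A 0 i j‖ ≤ V * ‖t - (0:ℝ)‖ :=
      Convex.norm_image_sub_le_of_norm_deriv_le (f := fun s => A s i j)
        (fun x _ => (hent x i j).differentiableAt)
        (fun x _ => by
          rw [(hent x i j).deriv]
          exact hA1bd x i j)
        convex_univ (Set.mem_univ (0:ℝ)) (Set.mem_univ t)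
    rw [Real.norm_eq_abs, Real.norm_eq_abs, sub_zero] at h1
    have h2 : |A t i j| ≤ |A 0 i j| + |A t i j - A 0 i j| := by
      have h3 := abs_add_le (A 0 i j) (A t i j - A 0 i j)
      simpa using h3
    linarith
  set W := ∑ i, ∑ j, |A 0 i j| with hWdef
  have hW0 : 0 ≤ W := Finset.sum_nonneg fun i _ => Finset.sum_nonneg fun j _ => abs_nonneg _
  have hWb : ∀ i j, |A 0 i j| ≤ W := by
    intro i j
    have h2 : |A 0 i j| ≤ ∑ j', |A 0 i j'| :=
      Finset.single_le_sum (fun j' _ => abs_nonneg (A 0 i j')) (Finset.mem_univ j)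
    have h3 : ∑ j', |A 0 i j'| ≤ ∑ i', ∑ j', |A 0 i' j'| :=
      Finset.single_le_sum (f := fun i' => ∑ j', |A 0 i' j'|)
        (fun i' _ => Finset.sum_nonneg fun j' _ => abs_nonneg _) (Finset.mem_univ i)
    exact le_trans h2 h3
  have hdetup : ∀ t : ℝ, (A t).det ≤ 6*(W + V*|t|)^3 := by
    intro t
    set K := W + V*|t| with hKdef
    have hK0 : 0 ≤ K := by have := abs_nonneg t; positivity
    have hK : ∀ i j, |A t i j| ≤ K := fun i j => le_trans (hAent t i j)
      (by have := hWb i j; rw [hKdef]; linarith)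
    have habs : ∀ x y z : ℝ, |x| ≤ K → |y| ≤ K → |z| ≤ K → x*y*z ≤ K^3 := by
      intro x y z hx hy hz
      calc x*y*z ≤ |x*y*z| := le_abs_self _
      _ = |x| * |y| * |z| := by rw [abs_mul, abs_mul]
      _ ≤ K*K*K := by
          apply mul_le_mul (mul_le_mul hx hy (abs_nonneg _) hK0) hz (abs_nonneg _)
          positivity
      _ = K^3 := by ring
    rw [Matrix.det_fin_three]
    have e1 : A t 0 0 * A t 1 1 * A t 2 2 ≤ K^3 := habs _ _ _ (hK 0 0) (hK 1 1) (hK 2 2)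
    have e2 : -(A t 0 0 * A t 1 2 * A t 2 1) ≤ K^3 := by
      have := habs (-(A t 0 0)) (A t 1 2) (A t 2 1) (by rw [abs_neg]; exact hK 0 0)
        (hK 1 2) (hK 2 1)
      linarith [this]
    have e3 : -(A t 0 1 * A t 1 0 * A t 2 2) ≤ K^3 := by
      have := habs (-(A t 0 1)) (A t 1 0) (A t 2 2) (by rw [abs_neg]; exact hK 0 1)
        (hK 1 0) (hK 2 2)
      linarith [this]
    have e4 : A t 0 1 * A t 1 2 * A t 2 0 ≤ K^3 := habs _ _ _ (hK 0 1) (hK 1 2) (hK 2 0)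
    have e5 : A t 0 2 * A t 1 0 * A t 2 1 ≤ K^3 := habs _ _ _ (hK 0 2) (hK 1 0) (hK 2 1)
    have e6 : -(A t 0 2 * A t 1 1 * A t 2 0) ≤ K^3 := by
      have := habs (-(A t 0 2)) (A t 1 1) (A t 2 0) (by rw [abs_neg]; exact hK 0 2)
        (hK 1 1) (hK 2 0)
      linarith [this]
    linarith
  set C := 24*(W^3 + V^3 + 1) with hCdef
  have hCpos : 0 < C := by positivity
  have hupper : ∀ t : ℝ, 0 ≤ t → (A t).det ≤ C * (1 + t ^ 3) := by
    intro t ht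
    have h1 := hdetup t
    rw [abs_of_nonneg ht] at h1
    have hb : (0:ℝ) ≤ V*t := mul_nonneg hV0 ht
    have h2 : (W + V*t)^3 ≤ 4*(W^3 + (V*t)^3) := by
      nlinarith [mul_nonneg (sq_nonneg (W - V*t)) (add_nonneg hW0 hb)]
    have h3 : (0:ℝ) ≤ t^3 := by positivity
    have h4 : (V*t)^3 = V^3 * t^3 := by ring
    have h5 : V^3*t^3 ≤ V^3*t^3 := le_rfl
    have h6 : 6*(W + V*t)^3 ≤ 24*W^3 + 24*V^3*t^3 := by nlinarith
    have h7 : 24*W^3 + 24*V^3*t^3 ≤ C * (1 + t^3) := by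
      rw [hCdef]
      have h8 : (0:ℝ) ≤ V^3 := by positivity
      nlinarith [mul_nonneg (pow_nonneg hW0 3) h3, mul_nonneg h8 h3]
    linarith
  exact ⟨c, C, hcpos, hCpos, fun t ht => ⟨hlower t ht, hupper t ht⟩⟩

/-- growth of det A(t): 1 + |t|^p ≲ det A(t) ≲ 1 + |t|³,
with p = 3 for 1 < γ ≤ 5/3 and p = 2/(γ-1) for γ > 5/3. -/
theorem stmt6 (γ p : ℝ) (hγ : 1 < γ)
    (hp : p = if γ ≤ 5/3 then 3 else 2 / (γ - 1))
    (A : ℝ → M3)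
    (hA : ContDiff ℝ 2 A)
    (hdet : ∀ t : ℝ, 0 < (A t).det)
    (hODE : ∀ t : ℝ, deriv (deriv A) t = ((A t).det ^ (1 - γ)) • ((A t)⁻¹)ᵀ) :
    ∃ c C : ℝ, 0 < c ∧ 0 < C ∧ ∀ t : ℝ,
      c * (1 + |t| ^ p) ≤ (A t).det ∧ (A t).det ≤ C * (1 + |t| ^ 3) := by
  obtain ⟨c₁, C₁, hc₁, hC₁, hbound₁⟩ := key γ p hγ hp A hA hdet hODE
  have hB : ContDiff ℝ 2 (fun s : ℝ => A (-s)) := hA.comp contDiff_neg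
  have hBdet : ∀ t : ℝ, 0 < ((fun s : ℝ => A (-s)) t).det := fun t => hdet (-t)
  have hBODE : ∀ t : ℝ, deriv (deriv (fun s : ℝ => A (-s))) t =
      (((fun s : ℝ => A (-s)) t).det ^ (1 - γ)) • (((fun s : ℝ => A (-s)) t)⁻¹)ᵀ := by
    intro t
    have h1 : deriv (fun s : ℝ => A (-s)) = fun s => -deriv A (-s) :=
      funext fun s => deriv_comp_neg A s
    rw [h1]
    have h2 : deriv (fun s : ℝ => -deriv A (-s)) t
        = -(deriv (fun s : ℝ => deriv A (-s)) t) := deriv.neg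
    rw [h2]; erw [deriv_comp_neg (deriv A) t]; rw [neg_neg]; exact hODE (-t)
  obtain ⟨c₂, C₂, hc₂, hC₂, hbound₂⟩ := key γ p hγ hp (fun s : ℝ => A (-s)) hB hBdet hBODE
  refine ⟨min c₁ c₂, max C₁ C₂, lt_min hc₁ hc₂, lt_of_lt_of_le hC₁ (le_max_left _ _), ?_⟩
  intro t
  rcases le_or_gt 0 t with ht | ht
  · obtain ⟨hl, hu⟩ := hbound₁ t ht
    rw [abs_of_nonneg ht]
    have hnn : (0:ℝ) ≤ 1 + t ^ p := by
      have := Real.rpow_nonneg ht p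
      linarith
    have hnn3 : (0:ℝ) ≤ 1 + t ^ 3 := by
      have := pow_nonneg ht 3
      linarith
    constructor
    · exact le_trans (mul_le_mul_of_nonneg_right (min_le_left _ _) hnn) hl
    · exact le_trans hu (mul_le_mul_of_nonneg_right (le_max_left _ _) hnn3)
  · have hmt : (0:ℝ) ≤ -t := by linarith
    obtain ⟨hl, hu⟩ := hbound₂ (-t) hmt
    simp only [neg_neg] at hl hu
    rw [abs_of_neg ht]
    have hnn : (0:ℝ) ≤ 1 + (-t) ^ p := by
      have := Real.rpow_nonneg hmt p
      linarith
    have hnn3 : (0:ℝ) ≤ 1 + (-t) ^ 3 := by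
      have := pow_nonneg hmt 3
      linarith
    constructor
    · exact le_trans (mul_le_mul_of_nonneg_right (min_le_right _ _) hnn) hl
    · exact le_trans hu (mul_le_mul_of_nonneg_right (le_max_right _ _) hnn3)
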